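/- Let n ≥ 3 and let C(n) = 𝓗^{n−2}(S^{n−2}) be the (n−2)-dimensional Hausdorff measure of the unit sphere S^{n−2} ⊂ ℝ^{n−1}. For t ∈ ℝ and R ≥ 0 define e(t,R) = C(n)^{−1} ∫_{S^{n−2}} ( t² + |R e₁ − y|² )^{(2−n)/2} d𝓗^{n−2}(y), where e₁ is a fixed unit vector of ℝ^{n−1}. Then: the function t ↦ e(t,1) is even; it is finite, continuous, and strictly decreasing on (0,∞); and there is a constant c > 0 depending only on n such that e(t,1) − e(t′,1) ≥ c whenever 0 < 2t < t′ < 1. -/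

import Mathlib

set_option maxHeartbeats 1000000

open MeasureTheory

noncomputable section

open Metric Set Module
open scoped RealInnerProductSpace ENNReal NNReal

/-- `C(n) = 𝓗^{n−2}(S^{n−2})`, the `(n−2)`-dimensional Hausdorff measure of the unit sphere
`S^{n−2} ⊂ ℝ^{n−1}`. -/
def sphC (n : ℕ) : ℝ :=
  (μH[(n : ℝ) - 2] (Metric.sphere (0 : EuclideanSpace ℝ (Fin (n - 1))) 1)).toReal

/-- `e(t,R) = C(n)⁻¹ ∫_{S^{n−2}} (t² + |R e₁ − y|²)^{(2−n)/2} d𝓗^{n−2}(y)`: the Newtonian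
potential at the point `(t, R e₁) ∈ ℝ × ℝ^{n−1} = ℝⁿ` created by the normalized Hausdorff
measure of the sphere `{0} × S^{n−2} ⊂ ℝⁿ`. -/
def eFun (n : ℕ) (e₁ : EuclideanSpace ℝ (Fin (n - 1))) (t R : ℝ) : ℝ :=
  (sphC n)⁻¹ *
    ∫ y in Metric.sphere (0 : EuclideanSpace ℝ (Fin (n - 1))) 1,
      (t ^ 2 + ‖R • e₁ - y‖ ^ 2) ^ (((2 : ℝ) - n) / 2) ∂(μH[(n : ℝ) - 2])

instance haarF (d : ℕ) :
    Measure.IsAddHaarMeasure (μH[(d:ℝ)] : Measure (EuclideanSpace ℝ (Fin d))) := by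
  have := isAddHaarMeasure_hausdorffMeasure (E := EuclideanSpace ℝ (Fin d))
  rwa [finrank_euclideanSpace_fin] at this

lemma exists_J {d m : ℕ} (hm : m = d + 1) (u : EuclideanSpace ℝ (Fin m)) (hu : ‖u‖ = 1) :
    ∃ (J : EuclideanSpace ℝ (Fin d) →ₗᵢ[ℝ] EuclideanSpace ℝ (Fin m))
      (P : EuclideanSpace ℝ (Fin m) → EuclideanSpace ℝ (Fin d)),
      LipschitzWith 1 P ∧ (∀ v, P (J v) = v) ∧ (∀ v, ⟪(J v : EuclideanSpace ℝ (Fin m)), u⟫ = 0) ∧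
      (∀ y, J (P y) + ⟪y, u⟫ • u = y) := by
  haveI : Fact (finrank ℝ (EuclideanSpace ℝ (Fin m)) = d + 1) :=
    ⟨by rw [finrank_euclideanSpace_fin, hm]⟩
  have hu0 : u ≠ 0 := by intro h; rw [h, norm_zero] at hu; norm_num at hu
  set K := (ℝ ∙ u)ᗮ with hK
  let B : OrthonormalBasis (Fin d) ℝ K := OrthonormalBasis.fromOrthogonalSpanSingleton d hu0
  refine ⟨K.subtypeₗᵢ.comp B.repr.symm.toLinearIsometry,
    fun y => B.repr (K.orthogonalProjectionOnto y), ?_, ?_, ?_, ?_⟩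
  · have h1 : ‖(K.orthogonalProjectionOnto : EuclideanSpace ℝ (Fin m) →L[ℝ] K)‖₊ ≤ 1 := by
      rw [← NNReal.coe_le_coe, coe_nnnorm]
      exact Submodule.orthogonalProjectionOnto_norm_le K
    have := (B.repr.isometry.lipschitz.comp ((K.orthogonalProjectionOnto).lipschitz.weaken h1))
    rw [mul_one] at this
    exact this
  · intro v
    simp [Submodule.orthogonalProjectionOnto_mem_subspace_eq_self]
  · intro v
    have : ((B.repr.symm v : K) : EuclideanSpace ℝ (Fin m)) ∈ K := (B.repr.symm v).2
    have h0 := Submodule.mem_orthogonal_singleton_iff_inner_right.1 this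
    simpa [real_inner_comm, mul_comm] using h0
  · intro y
    have h2 : ((K.orthogonalProjectionOnto y : K) : EuclideanSpace ℝ (Fin m))
        = y - (ℝ ∙ u).orthogonalProjectionOnto y := Submodule.starProjection_orthogonal_val (K := ℝ ∙ u) y
    have h3 : (((ℝ ∙ u).orthogonalProjectionOnto y : _) : EuclideanSpace ℝ (Fin m)) = ⟪y, u⟫ • u := by
      rw [Submodule.coe_orthogonalProjectionOnto_apply, Submodule.starProjection_singleton]
      rw [hu]
      simp [real_inner_comm, mul_comm]
    simp only [LinearIsometry.coe_comp, Function.comp_apply, Submodule.coe_subtypeₗᵢ,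
      LinearIsometryEquiv.coe_toLinearIsometry, LinearIsometryEquiv.symm_apply_apply]
    rw [Submodule.subtype_apply, h2, h3, sub_add_cancel]

lemma norm_le_of_sq_le_sq {a b : ℝ} (h : a^2 ≤ b^2) (ha : 0 ≤ a) (hb : 0 ≤ b) : a ≤ b := by
  calc a = Real.sqrt (a^2) := (Real.sqrt_sq ha).symm
    _ ≤ Real.sqrt (b^2) := Real.sqrt_le_sqrt h
    _ = b := Real.sqrt_sq hb

lemma aux_sqrt_lip {β D a b : ℝ} (hβ0 : 0 < β) (ha : 0 ≤ a) (hb : 0 ≤ b) (ha1 : a ≤ 1)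
    (hb1 : b ≤ 1) (hva : β^2 ≤ 1 - a^2) (hvb : β^2 ≤ 1 - b^2) (hab : |a - b| ≤ D) :
    |Real.sqrt (1 - a^2) - Real.sqrt (1 - b^2)| ≤ β⁻¹ * D := by
  set x := Real.sqrt (1 - a^2) with hx
  set y := Real.sqrt (1 - b^2) with hy
  have hx2 : x^2 = 1 - a^2 := Real.sq_sqrt (by nlinarith [pow_pos hβ0 2])
  have hy2 : y^2 = 1 - b^2 := Real.sq_sqrt (by nlinarith [pow_pos hβ0 2])
  have hxβ : β ≤ x := by
    have h := Real.sqrt_le_sqrt hva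
    rwa [Real.sqrt_sq hβ0.le] at h
  have hyβ : β ≤ y := by
    have h := Real.sqrt_le_sqrt hvb
    rwa [Real.sqrt_sq hβ0.le] at h
  have hkey : |x - y| * (x + y) = |b^2 - a^2| := by
    rw [← abs_of_nonneg (show 0 ≤ x + y by linarith), ← abs_mul]
    congr 1
    linear_combination hx2 - hy2
  have hD0 : 0 ≤ D := le_trans (abs_nonneg _) hab
  have habs2 : |b^2 - a^2| ≤ 2*D := by
    have h1 : |b^2 - a^2| = |a - b| * (a + b) := by
      rw [abs_sub_comm a b, ← abs_of_nonneg (show 0 ≤ a + b by linarith), ← abs_mul]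
      congr 1; ring
    rw [h1]
    have h2 : a + b ≤ 2 := by linarith
    nlinarith [abs_nonneg (a - b)]
  have h6 : |x - y| * (2*β) ≤ |x - y| * (x + y) :=
    mul_le_mul_of_nonneg_left (by linarith) (abs_nonneg _)
  rw [hkey] at h6
  have h8 : |x - y| * β ≤ D := by linarith
  calc |x - y| = (|x - y| * β) * β⁻¹ := by field_simp
    _ ≤ D * β⁻¹ := mul_le_mul_of_nonneg_right h8 (by positivity)
    _ = β⁻¹ * D := by ring

lemma cap_fin {d m : ℕ} (hm : m = d + 1) (u : EuclideanSpace ℝ (Fin m)) (hu : ‖u‖ = 1)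
    {β : ℝ} (hβ0 : 0 < β) (hβ1 : β ≤ 1) :
    μH[(d:ℝ)] {y : EuclideanSpace ℝ (Fin m) | ‖y‖ = 1 ∧ β ≤ ⟪y, u⟫} < ⊤ := by
  obtain ⟨J, P, hP, hPJ, hJu, hJP⟩ := exists_J hm u hu
  have huu : ⟪u, u⟫ = (1:ℝ) := by rw [real_inner_self_eq_norm_sq, hu]; norm_num
  set ρ : ℝ := Real.sqrt (1 - β^2) with hρ
  have hβsq : (0:ℝ) ≤ 1 - β^2 := by nlinarith
  have hρ2 : ρ^2 = 1 - β^2 := Real.sq_sqrt hβsq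
  have hρ0 : 0 ≤ ρ := Real.sqrt_nonneg _
  have hρ1 : ρ ≤ 1 := Real.sqrt_le_one.2 (by nlinarith)
  set f : EuclideanSpace ℝ (Fin d) → ℝ := fun v => Real.sqrt (1 - ‖v‖^2) with hf
  set h : EuclideanSpace ℝ (Fin d) → EuclideanSpace ℝ (Fin m) :=
    fun v => (J v : EuclideanSpace ℝ (Fin m)) + f v • u with hh
  set D : Set (EuclideanSpace ℝ (Fin d)) := closedBall 0 ρ with hD
  -- f is Lipschitz on D
  have hfl : ∀ v ∈ D, ∀ w ∈ D, |f v - f w| ≤ β⁻¹ * ‖v - w‖ := by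
    intro v hv w hw
    rw [mem_closedBall, dist_zero_right] at hv hw
    have hv1 : ‖v‖ ≤ 1 := hv.trans hρ1
    have hw1 : ‖w‖ ≤ 1 := hw.trans hρ1
    have hv2 : β^2 ≤ 1 - ‖v‖^2 := by
      have := pow_le_pow_left₀ (norm_nonneg v) hv 2
      linarith [hρ2]
    have hw2 : β^2 ≤ 1 - ‖w‖^2 := by
      have := pow_le_pow_left₀ (norm_nonneg w) hw 2
      linarith [hρ2]
    exact aux_sqrt_lip hβ0 (norm_nonneg v) (norm_nonneg w) hv1 hw1 hv2 hw2
      (abs_norm_sub_norm_le v w)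
  -- h is Lipschitz on D
  set Kn : ℝ≥0 := (1 + β⁻¹).toNNReal with hKn
  have hKnc : (Kn : ℝ) = 1 + β⁻¹ := Real.coe_toNNReal _ (by positivity)
  have hlip : LipschitzOnWith Kn h D := by
    rw [lipschitzOnWith_iff_dist_le_mul]
    intro v hv w hw
    rw [dist_eq_norm, dist_eq_norm, hKnc]
    have hd1 : h v - h w = (J (v - w) : EuclideanSpace ℝ (Fin m)) + (f v - f w) • u := by
      rw [hh]; simp only [J.map_sub]; module
    calc ‖h v - h w‖ ≤ ‖(J (v - w) : EuclideanSpace ℝ (Fin m))‖ + ‖(f v - f w) • u‖ := by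
          rw [hd1]; exact norm_add_le _ _
      _ = ‖v - w‖ + |f v - f w| := by
          rw [J.norm_map, norm_smul, hu, Real.norm_eq_abs, mul_one]
      _ ≤ ‖v - w‖ + β⁻¹ * ‖v - w‖ := by linarith [hfl v hv w hw]
      _ = (1 + β⁻¹) * ‖v - w‖ := by ring
  -- cap is contained in h '' D
  have hsub : {y : EuclideanSpace ℝ (Fin m) | ‖y‖ = 1 ∧ β ≤ ⟪y, u⟫} ⊆ h '' D := by
    rintro y ⟨hy1, hyβ⟩
    set c : ℝ := ⟪y, u⟫ with hc
    have hc1 : c ≤ 1 := by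
      have := real_inner_le_norm y u
      rw [hy1, hu] at this; linarith
    have hJv : (J (P y) : EuclideanSpace ℝ (Fin m)) = y - c • u := by
      have := hJP y
      rw [← hc] at this
      linear_combination (norm := module) this
    have hnv : ‖P y‖^2 = 1 - c^2 := by
      rw [← J.norm_map, hJv, norm_sub_sq_real, real_inner_smul_right, norm_smul, hy1,
        Real.norm_eq_abs, hu, ← hc]
      ring_nf
      rw [sq_abs]
      ring
    refine ⟨P y, ?_, ?_⟩
    · rw [hD, mem_closedBall, dist_zero_right]
      apply norm_le_of_sq_le_sq _ (norm_nonneg _) hρ0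
      rw [hnv, hρ2]
      nlinarith
    · have hfc : f (P y) = c := by
        show Real.sqrt (1 - ‖P y‖^2) = c
        rw [hnv, show (1 - (1 - c^2)) = c^2 by ring, Real.sqrt_sq (by linarith : (0:ℝ) ≤ c)]
      show (J (P y) : EuclideanSpace ℝ (Fin m)) + f (P y) • u = y
      rw [hfc, hJv]
      module
  calc μH[(d:ℝ)] {y : EuclideanSpace ℝ (Fin m) | ‖y‖ = 1 ∧ β ≤ ⟪y, u⟫}
      ≤ μH[(d:ℝ)] (h '' D) := measure_mono hsub
    _ ≤ (Kn : ℝ≥0∞) ^ (d:ℝ) * μH[(d:ℝ)] D := hlip.hausdorffMeasure_image_le (by positivity)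
    _ < ⊤ := ENNReal.mul_lt_top
        (ENNReal.rpow_lt_top_of_nonneg (by positivity) ENNReal.coe_ne_top)
        (isCompact_closedBall _ _).measure_lt_top

lemma sphere_fin {d m : ℕ} (hm : m = d + 1) :
    μH[(d:ℝ)] (sphere (0 : EuclideanSpace ℝ (Fin m)) 1) < ⊤ := by
  set β : ℝ := (Real.sqrt m)⁻¹ with hβ
  have hm1 : (1:ℝ) ≤ (m:ℝ) := by
    have : 1 ≤ m := by omega
    exact_mod_cast this
  have hs1 : (1:ℝ) ≤ Real.sqrt m := by
    rw [show (1:ℝ) = Real.sqrt 1 by simp]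
    exact Real.sqrt_le_sqrt hm1
  have hβ0 : 0 < β := inv_pos.2 (by linarith)
  have hβ1 : β ≤ 1 := by
    rw [hβ, inv_le_one_iff₀]
    right; linarith
  have cover : sphere (0 : EuclideanSpace ℝ (Fin m)) 1 ⊆
      ⋃ p : Fin m × Bool, {y : EuclideanSpace ℝ (Fin m) |
        ‖y‖ = 1 ∧ β ≤ ⟪y, EuclideanSpace.single p.1 (if p.2 then (1:ℝ) else -1)⟫} := by
    intro y hy
    rw [mem_sphere_zero_iff_norm] at hy
    have hS : (0:ℝ) ≤ ∑ i, ‖y i‖^2 := by positivity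
    have hsum : ∑ i, ‖y i‖^2 = 1 := by
      have h2 : ‖y‖^2 = ∑ i, ‖y i‖^2 := by
        rw [EuclideanSpace.norm_eq]; exact Real.sq_sqrt hS
      rw [hy] at h2
      simpa using h2.symm
    have hex : ∃ i, (1:ℝ)/m ≤ ‖y i‖^2 := by
      by_contra hno
      push_neg at hno
      have hne : (Finset.univ : Finset (Fin m)).Nonempty := by
        rw [Finset.univ_nonempty_iff]
        exact ⟨⟨0, by omega⟩⟩
      have hlt : ∑ i, ‖y i‖^2 < ∑ _i : Fin m, (1:ℝ)/m :=
        Finset.sum_lt_sum_of_nonempty hne (fun i _ => hno i)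
      have hconst : ∑ _i : Fin m, (1:ℝ)/m = 1 := by
        rw [Finset.sum_const, Finset.card_univ, Fintype.card_fin, nsmul_eq_mul]
        field_simp
      rw [hsum, hconst] at hlt
      exact lt_irrefl _ hlt
    obtain ⟨i, hi⟩ := hex
    have habs : β ≤ ‖y i‖ := by
      have hβeq : β = Real.sqrt ((1:ℝ)/m) := by
        rw [hβ, one_div, Real.sqrt_inv]
      rw [hβeq]
      calc Real.sqrt ((1:ℝ)/m) ≤ Real.sqrt (‖y i‖^2) := Real.sqrt_le_sqrt hi
        _ = ‖y i‖ := Real.sqrt_sq (norm_nonneg _)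
    rw [Real.norm_eq_abs] at habs
    rcases le_or_gt 0 (y i) with hyi | hyi
    · refine mem_iUnion.2 ⟨(i, true), hy, ?_⟩
      have h5 : ⟪y, EuclideanSpace.single i (if true then (1:ℝ) else -1)⟫ = y i := by
        simp [EuclideanSpace.inner_single_right]
      rw [h5]
      rwa [abs_of_nonneg hyi] at habs
    · refine mem_iUnion.2 ⟨(i, false), hy, ?_⟩
      have h5 : ⟪y, EuclideanSpace.single i (if false then (1:ℝ) else -1)⟫ = -(y i) := by
        simp [EuclideanSpace.inner_single_right]
      rw [h5]
      rw [abs_of_neg hyi] at habs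
      linarith
  calc μH[(d:ℝ)] (sphere (0 : EuclideanSpace ℝ (Fin m)) 1)
      ≤ μH[(d:ℝ)] (⋃ p : Fin m × Bool, {y : EuclideanSpace ℝ (Fin m) |
          ‖y‖ = 1 ∧ β ≤ ⟪y, EuclideanSpace.single p.1 (if p.2 then (1:ℝ) else -1)⟫}) :=
        measure_mono cover
    _ ≤ ∑' p : Fin m × Bool, μH[(d:ℝ)] {y : EuclideanSpace ℝ (Fin m) |
          ‖y‖ = 1 ∧ β ≤ ⟪y, EuclideanSpace.single p.1 (if p.2 then (1:ℝ) else -1)⟫} :=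
        measure_iUnion_le _
    _ < ⊤ := by
      rw [tsum_fintype]
      refine ENNReal.sum_lt_top.2 (fun p _ => cap_fin hm _ ?_ hβ0 hβ1)
      rw [EuclideanSpace.norm_single]
      rcases p.2 <;> simp

lemma cap_bound {d m : ℕ} (hm : m = d + 1) (u : EuclideanSpace ℝ (Fin m)) (hu : ‖u‖ = 1)
    {s : ℝ} (hs0 : 0 < s) (hs1 : s ≤ 1) :
    ENNReal.ofReal ((s/2) ^ d) * μH[(d:ℝ)] (ball (0 : EuclideanSpace ℝ (Fin d)) 1)
      ≤ μH[(d:ℝ)] (sphere (0 : EuclideanSpace ℝ (Fin m)) 1 ∩ closedBall u s) := by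
  obtain ⟨J, P, hP, hPJ, hJu, hJP⟩ := exists_J hm u hu
  have huu : ⟪u, u⟫ = (1:ℝ) := by
    rw [real_inner_self_eq_norm_sq, hu]; norm_num
  have hsub : closedBall (0 : EuclideanSpace ℝ (Fin d)) (s/2)
      ⊆ P '' (sphere (0 : EuclideanSpace ℝ (Fin m)) 1 ∩ closedBall u s) := by
    intro w hw
    rw [mem_closedBall, dist_zero_right] at hw
    have hw1 : ‖w‖ ≤ 1/2 := hw.trans (by linarith)
    set c : ℝ := Real.sqrt (1 - ‖w‖^2) with hc
    have hw2 : ‖w‖^2 ≤ 1 := by nlinarith [norm_nonneg w]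
    have hc0 : 0 ≤ c := Real.sqrt_nonneg _
    have hc2 : c^2 = 1 - ‖w‖^2 := Real.sq_sqrt (by linarith)
    have hc1 : c ≤ 1 := Real.sqrt_le_one.2 (by nlinarith [sq_nonneg ‖w‖])
    have h1w : (0:ℝ) ≤ 1 - ‖w‖^2 := by nlinarith [norm_nonneg w]
    have hcge : 1 - ‖w‖^2 ≤ c := by
      have h := Real.sqrt_le_sqrt (show (1-‖w‖^2)^2 ≤ 1-‖w‖^2 by nlinarith [norm_nonneg w])
      rwa [Real.sqrt_sq h1w] at h
    set y : EuclideanSpace ℝ (Fin m) := J w + c • u with hy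
    have hinner : ⟪(J w : EuclideanSpace ℝ (Fin m)), c • u⟫ = 0 := by
      rw [real_inner_smul_right, hJu, mul_zero]
    have hny : ‖y‖^2 = 1 := by
      rw [hy, norm_add_sq_real, hinner, norm_smul, J.norm_map, hu]
      simp only [Real.norm_eq_abs, abs_of_nonneg hc0]
      linear_combination hc2
    have hyu : ⟪y, u⟫ = c := by
      rw [hy, inner_add_left, real_inner_smul_left, huu, hJu w, zero_add, mul_one]
    refine ⟨y, ⟨?_, ?_⟩, ?_⟩
    · rw [mem_sphere_zero_iff_norm]
      have hy0 : (‖y‖ - 1) * (‖y‖ + 1) = 0 := by linear_combination hny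
      rcases mul_eq_zero.1 hy0 with h | h
      · linarith
      · linarith [norm_nonneg y]
    · rw [mem_closedBall, dist_eq_norm]
      have : y - u = (J w : EuclideanSpace ℝ (Fin m)) + (c - 1) • u := by
        rw [hy]; module
      have hns : ‖y - u‖^2 ≤ s^2 := by
        rw [this, norm_add_sq_real, real_inner_smul_right, hJu, mul_zero, norm_smul,
          J.norm_map, hu]
        simp only [Real.norm_eq_abs, mul_one]
        have h1c : (1 - c) ≤ ‖w‖^2 := by linarith
        have habs : |c - 1|^2 = (1-c)^2 := by rw [sq_abs]; ring
        have h4 : (1-c)*(1-c) ≤ ‖w‖^2 * ‖w‖^2 :=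
          mul_le_mul h1c h1c (by linarith) (sq_nonneg _)
        have h5 : ‖w‖^2 ≤ s^2/4 := by nlinarith [norm_nonneg w]
        nlinarith [norm_nonneg w, habs, h4, h5, hw2, hs0]
      calc ‖y - u‖ = Real.sqrt (‖y-u‖^2) := (Real.sqrt_sq (norm_nonneg _)).symm
        _ ≤ Real.sqrt (s^2) := Real.sqrt_le_sqrt hns
        _ = s := Real.sqrt_sq hs0.le
    · -- P y = w
      have h1 : J (P y) + ⟪y, u⟫ • u = y := hJP y
      rw [hyu, hy] at h1
      have h2 : J (P y) = J w := by
        have h1' : J (P y) + c • u = J w + c • u := by rw [h1]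
        exact add_right_cancel h1'
      have := congrArg P h2
      rwa [hPJ, hPJ] at this
  calc ENNReal.ofReal ((s/2) ^ d) * μH[(d:ℝ)] (ball (0 : EuclideanSpace ℝ (Fin d)) 1)
      = μH[(d:ℝ)] (closedBall (0 : EuclideanSpace ℝ (Fin d)) (s/2)) := by
        rw [Measure.addHaar_closedBall _ _ (by linarith : (0:ℝ) ≤ s/2),
          finrank_euclideanSpace_fin]
    _ ≤ μH[(d:ℝ)] (P '' (sphere (0 : EuclideanSpace ℝ (Fin m)) 1 ∩ closedBall u s)) :=
        measure_mono hsub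
    _ ≤ 1 ^ (d:ℝ) * μH[(d:ℝ)] (sphere (0 : EuclideanSpace ℝ (Fin m)) 1 ∩ closedBall u s) :=
        hP.hausdorffMeasure_image_le (by positivity) _
    _ = _ := by simp

theorem stmt15 (n : ℕ) (hn : 3 ≤ n)
    (e₁ : EuclideanSpace ℝ (Fin (n - 1))) (he₁ : ‖e₁‖ = 1) :
    (∀ t : ℝ, eFun n e₁ t 1 = eFun n e₁ (-t) 1) ∧
    (∀ t : ℝ, 0 < t →
      IntegrableOn
        (fun y : EuclideanSpace ℝ (Fin (n - 1)) =>
          (t ^ 2 + ‖(1 : ℝ) • e₁ - y‖ ^ 2) ^ (((2 : ℝ) - n) / 2))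
        (Metric.sphere 0 1) (μH[(n : ℝ) - 2])) ∧
    ContinuousOn (fun t => eFun n e₁ t 1) (Set.Ioi 0) ∧
    StrictAntiOn (fun t => eFun n e₁ t 1) (Set.Ioi 0) ∧
    ∃ c : ℝ, 0 < c ∧ ∀ t t' : ℝ, 0 < t → 2 * t < t' → t' < 1 →
      c ≤ eFun n e₁ t 1 - eFun n e₁ t' 1 := by
  obtain ⟨d, hd⟩ : ∃ d, n - 2 = d := ⟨n - 2, rfl⟩
  have hdm : n - 1 = d + 1 := by omega
  have hcast : ((d:ℕ):ℝ) = (n:ℝ) - 2 := by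
    have h2 : (2:ℕ) ≤ n := by omega
    rw [← hd]
    push_cast [Nat.cast_sub h2]
    ring
  have hn3 : (3:ℝ) ≤ (n:ℝ) := by exact_mod_cast hn
  set p : ℝ := ((2:ℝ) - n) / 2 with hp_def
  have hp : p < 0 := by rw [hp_def]; linarith
  set S : Set (EuclideanSpace ℝ (Fin (n-1))) :=
    Metric.sphere (0 : EuclideanSpace ℝ (Fin (n-1))) 1 with hS
  set g : ℝ → EuclideanSpace ℝ (Fin (n-1)) → ℝ := fun t y => (t^2 + ‖e₁ - y‖^2) ^ p with hg
  -- measure facts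
  have hSfin : μH[(n:ℝ)-2] S < ⊤ := by
    rw [← hcast]; exact sphere_fin hdm
  set κ : ℝ≥0∞ := μH[(d:ℝ)] (ball (0 : EuclideanSpace ℝ (Fin d)) 1) with hκ
  have hκ0 : 0 < κ := measure_ball_pos _ _ one_pos
  have hκfin : κ < ⊤ := lt_of_le_of_lt (measure_mono ball_subset_closedBall)
    (isCompact_closedBall _ _).measure_lt_top
  have hκT : 0 < κ.toReal := ENNReal.toReal_pos hκ0.ne' hκfin.ne
  have hcap : ∀ s : ℝ, 0 < s → s ≤ 1 →
      ENNReal.ofReal ((s/2) ^ d) * κ ≤ μH[(n:ℝ)-2] (S ∩ closedBall e₁ s) := by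
    intro s h0 h1
    rw [← hcast]
    exact cap_bound hdm e₁ he₁ h0 h1
  have hSpos : 0 < μH[(n:ℝ)-2] S := by
    refine lt_of_lt_of_le (lt_of_lt_of_le ?_ (hcap 1 one_pos le_rfl))
      (measure_mono inter_subset_left)
    exact ENNReal.mul_pos (ENNReal.ofReal_pos.2 (by positivity)).ne' hκ0.ne'
  have hC0 : 0 < sphC n := ENNReal.toReal_pos hSpos.ne' hSfin.ne
  have hCinv : 0 < (sphC n)⁻¹ := inv_pos.2 hC0
  -- pointwise facts
  have hbase : ∀ (t : ℝ) (y : EuclideanSpace ℝ (Fin (n-1))), t ≠ 0 → 0 < t^2 + ‖e₁ - y‖^2 := by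
    intro t y ht; positivity
  have hgpos : ∀ (t : ℝ) (y : EuclideanSpace ℝ (Fin (n-1))), t ≠ 0 → 0 < g t y := fun t y ht =>
    Real.rpow_pos_of_pos (hbase t y ht) p
  have hg_le : ∀ (t : ℝ), 0 < t → ∀ y : EuclideanSpace ℝ (Fin (n-1)), g t y ≤ (t^2) ^ p := by
    intro t ht y
    exact Real.rpow_le_rpow_of_nonpos (by positivity) (by nlinarith [sq_nonneg ‖e₁ - y‖]) hp.le
  have hgc : ∀ t : ℝ, t ≠ 0 → Continuous (g t) := by
    intro t ht
    apply Continuous.rpow_const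
    · fun_prop
    · intro y; exact Or.inl (hbase t y ht).ne'
  have hInt : ∀ t : ℝ, 0 < t → IntegrableOn (g t) S μH[(n:ℝ)-2] := by
    intro t ht
    have hb : IntegrableOn (fun _ : EuclideanSpace ℝ (Fin (n-1)) => (t^2) ^ p) S μH[(n:ℝ)-2] :=
      integrableOn_const hSfin.ne
    refine Integrable.mono' hb ((hgc t ht.ne').aestronglyMeasurable.restrict) ?_
    refine ae_of_all _ (fun y => ?_)
    rw [Real.norm_eq_abs, abs_of_pos (hgpos t y ht.ne')]
    exact hg_le t ht y
  have heFun : ∀ t : ℝ, eFun n e₁ t 1 = (sphC n)⁻¹ * ∫ y in S, g t y ∂μH[(n:ℝ)-2] := by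
    intro t
    simp only [eFun, one_smul]
    rfl
  refine ⟨?_, ?_, ?_, ?_, ?_⟩
  · intro t
    simp only [eFun, neg_sq]
  · intro t ht
    have := hInt t ht
    simpa [hg, one_smul] using this
  · intro t₀ ht₀
    rw [mem_Ioi] at ht₀
    apply ContinuousAt.continuousWithinAt
    have hI : ContinuousAt (fun t => ∫ y in S, g t y ∂μH[(n:ℝ)-2]) t₀ := by
      apply continuousAt_of_dominated (bound := fun _ : EuclideanSpace ℝ (Fin (n-1)) => ((t₀/2)^2) ^ p)
      · filter_upwards [eventually_ne_nhds ht₀.ne'] with t ht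
        exact ((hgc t ht).aestronglyMeasurable.restrict)
      · filter_upwards [eventually_gt_nhds (show t₀/2 < t₀ by linarith)] with t ht
        refine ae_of_all _ (fun y => ?_)
        have ht0 : 0 < t := lt_trans (by linarith) ht
        rw [Real.norm_eq_abs, abs_of_pos (hgpos t y ht0.ne')]
        refine (hg_le t ht0 y).trans ?_
        exact Real.rpow_le_rpow_of_nonpos (by positivity) (by nlinarith) hp.le
      · exact integrableOn_const hSfin.ne
      · refine ae_of_all _ (fun y => ?_)
        have : ContinuousAt (fun t : ℝ => t^2 + ‖e₁ - y‖^2) t₀ := by fun_prop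
        exact this.rpow_const (Or.inl (hbase t₀ y ht₀.ne').ne')
    have : ContinuousAt (fun t => (sphC n)⁻¹ * ∫ y in S, g t y ∂μH[(n:ℝ)-2]) t₀ :=
      hI.const_mul _
    refine this.congr ?_
    filter_upwards with t
    simp only [heFun]
  · intro t₁ h₁ t₂ h₂ hlt
    rw [mem_Ioi] at h₁ h₂
    simp only [heFun]
    apply mul_lt_mul_of_pos_left _ hCinv
    have hI₁ := hInt t₁ h₁
    have hI₂ := hInt t₂ h₂
    have hptlt : ∀ y : EuclideanSpace ℝ (Fin (n-1)), g t₂ y < g t₁ y := by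
      intro y
      apply Real.rpow_lt_rpow_of_neg (hbase t₁ y h₁.ne') _ hp
      nlinarith
    have hdiff : 0 < ∫ y in S, (g t₁ y - g t₂ y) ∂μH[(n:ℝ)-2] := by
      rw [integral_pos_iff_support_of_nonneg_ae
        (ae_of_all _ (fun y => sub_nonneg.2 (hptlt y).le)) (hI₁.sub hI₂)]
      have hsupp : (Function.support fun y : EuclideanSpace ℝ (Fin (n-1)) => g t₁ y - g t₂ y) = univ :=
        Set.eq_univ_iff_forall.2 (fun y => Function.mem_support.2 (sub_ne_zero.2 (hptlt y).ne'))
      rw [hsupp, Measure.restrict_apply_univ]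
      exact hSpos
    have hsplit := integral_sub hI₁ hI₂
    rw [hsplit] at hdiff
    linarith
  · have h24 : (4:ℝ)^p < (2:ℝ)^p := Real.rpow_lt_rpow_of_neg (by norm_num) (by norm_num) hp
    refine ⟨(sphC n)⁻¹ * (((2:ℝ)^p - (4:ℝ)^p) * (((2:ℝ)⁻¹)^d * κ.toReal)), ?_, ?_⟩
    · have h1 : (0:ℝ) < (2:ℝ)^p - 4^p := by linarith
      have h2 : (0:ℝ) < ((2:ℝ)⁻¹)^d * κ.toReal := by positivity
      exact mul_pos hCinv (mul_pos h1 h2)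
    · intro t t' ht htt' ht'1
      have ht2 : t < 1/2 := by linarith
      have ht'0 : 0 < t' := by linarith
      have htt2 : t^2 ≤ t'^2 := by nlinarith
      have h4t2 : 4*(t^2) ≤ t'^2 := by nlinarith
      set A : Set (EuclideanSpace ℝ (Fin (n-1))) := S ∩ closedBall e₁ t with hA
      have hAm : MeasurableSet A :=
        (Metric.isClosed_sphere.measurableSet).inter measurableSet_closedBall
      have hAfin : μH[(n:ℝ)-2] A ≠ ⊤ :=
        (lt_of_le_of_lt (measure_mono inter_subset_left) hSfin).ne
      have hAcap := hcap t ht (by linarith)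
      have hAtoReal : (t/2)^d * κ.toReal ≤ (μH[(n:ℝ)-2] A).toReal := by
        have h := ENNReal.toReal_mono hAfin hAcap
        rwa [ENNReal.toReal_mul, ENNReal.toReal_ofReal (by positivity)] at h
      have hpt : ∀ y ∈ A, ((2:ℝ)^p - 4^p) * (t^2)^p ≤ g t y - g t' y := by
        intro y hy
        obtain ⟨hyS, hyB⟩ := hy
        have hr : ‖e₁ - y‖ ≤ t := by
          rw [mem_closedBall, dist_comm, dist_eq_norm] at hyB
          exact hyB
        have hr0 : 0 ≤ ‖e₁ - y‖ := norm_nonneg _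
        have hr2 : ‖e₁ - y‖^2 ≤ t^2 := pow_le_pow_left₀ hr0 hr 2
        have h1 : ((2:ℝ)*(t^2))^p ≤ g t y :=
          Real.rpow_le_rpow_of_nonpos (by positivity) (by linarith) hp.le
        have h2 : g t' y ≤ ((4:ℝ)*(t^2))^p :=
          Real.rpow_le_rpow_of_nonpos (by positivity)
            (by linarith [sq_nonneg ‖e₁ - y‖]) hp.le
        have e1 : ((2:ℝ)*(t^2))^p = 2^p * (t^2)^p := Real.mul_rpow (by norm_num) (by positivity)
        have e2 : ((4:ℝ)*(t^2))^p = 4^p * (t^2)^p := Real.mul_rpow (by norm_num) (by positivity)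
        rw [e1] at h1; rw [e2] at h2
        have hqq : ((2:ℝ)^p - 4^p) * (t^2)^p = 2^p*(t^2)^p - 4^p*(t^2)^p := by ring
        rw [hqq]
        linarith
      have hIt := hInt t ht
      have hIt' := hInt t' ht'0
      have hsubInt : IntegrableOn (fun y => g t y - g t' y) S μH[(n:ℝ)-2] := hIt.sub hIt'
      have hnn : 0 ≤ᵐ[μH[(n:ℝ)-2].restrict S] (fun y => g t y - g t' y) := by
        refine ae_of_all _ (fun y => ?_)
        have : g t' y ≤ g t y :=
          Real.rpow_le_rpow_of_nonpos (by positivity) (by linarith [htt2]) hp.le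
        exact sub_nonneg.2 this
      have hmono : ∫ y in A, (g t y - g t' y) ∂μH[(n:ℝ)-2]
          ≤ ∫ y in S, (g t y - g t' y) ∂μH[(n:ℝ)-2] :=
        setIntegral_mono_set hsubInt hnn (HasSubset.Subset.eventuallyLE inter_subset_left)
      have hconst : ((2:ℝ)^p - 4^p) * (t^2)^p * (μH[(n:ℝ)-2] A).toReal
          ≤ ∫ y in A, (g t y - g t' y) ∂μH[(n:ℝ)-2] :=
        setIntegral_ge_of_const_le_real hAm hAfin hpt (hsubInt.mono_set inter_subset_left)
      have hsplit : ∫ y in S, (g t y - g t' y) ∂μH[(n:ℝ)-2]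
          = (∫ y in S, g t y ∂μH[(n:ℝ)-2]) - ∫ y in S, g t' y ∂μH[(n:ℝ)-2] :=
        integral_sub hIt hIt'
      have h2p : ((t:ℝ)^2)^p = t ^ (2*p) := by
        rw [← Real.rpow_natCast t 2, ← Real.rpow_mul ht.le]
        norm_num
      have hsum0 : 2*p + (d:ℝ) = 0 := by rw [hcast, hp_def]; ring
      have hone : (t^2)^p * t^d = 1 := by
        rw [h2p, ← Real.rpow_natCast t d, ← Real.rpow_add ht, hsum0, Real.rpow_zero]
      have hexp : (t^2)^p * (t/2)^d = ((2:ℝ)⁻¹)^d := by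
        have hh : (t/2)^d = t^d * ((2:ℝ)⁻¹)^d := by
          rw [div_eq_mul_inv, mul_pow]
        rw [hh, ← mul_assoc, hone, one_mul]
      have hfinal : ((2:ℝ)^p - 4^p) * (((2:ℝ)⁻¹)^d * κ.toReal)
          ≤ (∫ y in S, g t y ∂μH[(n:ℝ)-2]) - ∫ y in S, g t' y ∂μH[(n:ℝ)-2] := by
        calc ((2:ℝ)^p - 4^p) * (((2:ℝ)⁻¹)^d * κ.toReal)
            = ((2:ℝ)^p - 4^p) * ((t^2)^p * ((t/2)^d * κ.toReal)) := by
              rw [← hexp]; ring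
          _ ≤ ((2:ℝ)^p - 4^p) * ((t^2)^p * (μH[(n:ℝ)-2] A).toReal) := by
              refine mul_le_mul_of_nonneg_left ?_ (by linarith)
              exact mul_le_mul_of_nonneg_left hAtoReal (Real.rpow_nonneg (by positivity) _)
          _ = ((2:ℝ)^p - 4^p) * (t^2)^p * (μH[(n:ℝ)-2] A).toReal := by ring
          _ ≤ ∫ y in A, (g t y - g t' y) ∂μH[(n:ℝ)-2] := hconst
          _ ≤ ∫ y in S, (g t y - g t' y) ∂μH[(n:ℝ)-2] := hmono
          _ = _ := hsplit
      rw [heFun t, heFun t', ← mul_sub]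
      exact mul_le_mul_of_nonneg_left hfinal hCinv.le

end
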